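/- Let 0 ≤ p < m and 0 ≤ q ≤ n, and let α be an entry of A. Then the evaluation of Sylv^{p,q}(A,B) at α equals (−1)^p · coeff_{p+q}( Sylv^{p,q}(A−α, B) ) · R(α,B), where A−α is the list A with the entry α removed and coeff_{p+q} denotes the coefficient of x^{p+q}. -/

import Mathlib

open Polynomial Finset

noncomputable section

variable {F : Type*} [Field F]

/-- Coefficient of a polynomial at an integer index (0 for negative indices). -/
def coeffZ (f : F[X]) (z : ℤ) : F := if 0 ≤ z then f.coeff z.toNat else 0

/-- The `(m+n-2k) × (m+n-2k)` matrix `M_k(f,g)` whose determinant is the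
`k`-th subresultant of `f` (of degree `m`) and `g` (of degree `n`). -/
def sresM (m n k : ℕ) (f g : F[X]) :
    Matrix (Fin (m + n - 2*k)) (Fin (m + n - 2*k)) F[X] := fun i j =>
  if (j : ℕ) = m + n - 2*k - 1 then
    if (i : ℕ) < n - k then X ^ (n - k - 1 - (i : ℕ)) * f
    else X ^ (m - k - 1 - ((i : ℕ) - (n - k))) * g
  else
    if (i : ℕ) < n - k then C (coeffZ f ((m : ℤ) + (i : ℕ) - (j : ℕ)))
    else C (coeffZ g ((k : ℤ) + (i : ℕ) - (j : ℕ)))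

/-- `M_k(f,g)` with the last column replaced by `(x^{n-k-1},…,x^0,0,…,0)ᵀ`. -/
def sresMF (m n k : ℕ) (f g : F[X]) :
    Matrix (Fin (m + n - 2*k)) (Fin (m + n - 2*k)) F[X] := fun i j =>
  if (j : ℕ) = m + n - 2*k - 1 then
    if (i : ℕ) < n - k then X ^ (n - k - 1 - (i : ℕ)) else 0
  else sresM m n k f g i j

/-- `M_k(f,g)` with the last column replaced by `(0,…,0,x^{m-k-1},…,x^0)ᵀ`. -/
def sresMG (m n k : ℕ) (f g : F[X]) :
    Matrix (Fin (m + n - 2*k)) (Fin (m + n - 2*k)) F[X] := fun i j =>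
  if (j : ℕ) = m + n - 2*k - 1 then
    if (i : ℕ) < n - k then 0 else X ^ (m - k - 1 - ((i : ℕ) - (n - k)))
  else sresM m n k f g i j

/-- The `k`-th subresultant `Sres_k(f,g)` w.r.t. degrees `m`, `n`. -/
def Sres (m n k : ℕ) (f g : F[X]) : F[X] := (sresM m n k f g).det

/-- The polynomial `F_k(f,g)` w.r.t. degrees `m`, `n`. -/
def Fk (m n k : ℕ) (f g : F[X]) : F[X] := (sresMF m n k f g).det

/-- The polynomial `G_k(f,g)` w.r.t. degrees `m`, `n`. -/
def Gk (m n k : ℕ) (f g : F[X]) : F[X] := (sresMG m n k f g).det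

/-- `R(Y,Z) = ∏_{y ∈ Y, z ∈ Z} (y - z)`. -/
def Rp {ι κ : Type*} (a : ι → F) (b : κ → F) (S : Finset ι) (T : Finset κ) : F :=
  ∏ i ∈ S, ∏ j ∈ T, (a i - b j)

/-- `R(x,Y) = ∏_{y ∈ Y} (x - y)` as a polynomial. -/
def RX {ι : Type*} (a : ι → F) (S : Finset ι) : F[X] :=
  ∏ i ∈ S, (X - C (a i))

/-- Sylvester's double sum `Sylv^{p,q}(A,B)`. -/
def sylv {m n : ℕ} (A : Fin m → F) (B : Fin n → F) (p q : ℕ) : F[X] :=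
  ∑ S ∈ (univ : Finset (Fin m)).powersetCard p,
    ∑ T ∈ (univ : Finset (Fin n)).powersetCard q,
      C ((Rp A B S T * Rp A B Sᶜ Tᶜ) / (Rp A A S Sᶜ * Rp B B T Tᶜ)) *
        (RX A S * RX B T)

end

section Aux

open Polynomial Finset

variable {F : Type*} [Field F]

lemma RX_monic {ι : Type*} (a : ι → F) (S : Finset ι) : (RX a S).Monic :=
  monic_prod_of_monic _ _ fun i _ => monic_X_sub_C _

lemma RX_natDegree {ι : Type*} (a : ι → F) (S : Finset ι) :
    (RX a S).natDegree = S.card := by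
  rw [RX, natDegree_prod]
  · simp
  · intro i _; exact X_sub_C_ne_zero _

lemma RX_eval {ι : Type*} (a : ι → F) (S : Finset ι) (x : F) :
    (RX a S).eval x = ∏ i ∈ S, (x - a i) := by
  simp [RX, eval_prod]

lemma coeff_term {ι κ : Type*} (a : ι → F) (b : κ → F) (S : Finset ι) (T : Finset κ) (c : F) :
    (C c * (RX a S * RX b T)).coeff (S.card + T.card) = c := by
  have h : (RX a S * RX b T).Monic := (RX_monic a S).mul (RX_monic b T)
  have hd : (RX a S * RX b T).natDegree = S.card + T.card := by
    rw [(RX_monic a S).natDegree_mul (RX_monic b T), RX_natDegree, RX_natDegree]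
  rw [coeff_C_mul, ← hd, h.coeff_natDegree, mul_one]

/-- The coefficient of `x^{p+q}` in the Sylvester sum is the sum of the constants. -/
lemma sylv_coeff {m n : ℕ} (A : Fin m → F) (B : Fin n → F) (p q : ℕ) :
    (sylv A B p q).coeff (p + q)
      = ∑ S ∈ (univ : Finset (Fin m)).powersetCard p,
          ∑ T ∈ (univ : Finset (Fin n)).powersetCard q,
            (Rp A B S T * Rp A B Sᶜ Tᶜ) / (Rp A A S Sᶜ * Rp B B T Tᶜ) := by
  rw [sylv, finset_sum_coeff]
  refine Finset.sum_congr rfl fun S hS => ?_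
  rw [finset_sum_coeff]
  refine Finset.sum_congr rfl fun T hT => ?_
  have hS' : S.card = p := (Finset.mem_powersetCard.mp hS).2
  have hT' : T.card = q := (Finset.mem_powersetCard.mp hT).2
  rw [← hS', ← hT', coeff_term]

end Aux

/-- for `0 ≤ p < |A|` and `0 ≤ q ≤ n`, and `α` an entry of `A`,
`Sylv^{p,q}(A,B)(α) = (−1)^p · coeff_{p+q}(Sylv^{p,q}(A−α,B)) · R(α,B)`.
Here `A` has length `m+1` and `A − α` is `A` with the entry `α = A i0` removed. -/
theorem sylvester_double_sum_eval_root_f {F : Type*} [Field F] {m n : ℕ} (hn : 1 ≤ n)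
    (A : Fin (m + 1) → F) (B : Fin n → F)
    (hA : Function.Injective A) (hB : Function.Injective B)
    (p q : ℕ) (hp : p < m + 1) (hq : q ≤ n) (i0 : Fin (m + 1)) :
    (sylv A B p q).eval (A i0)
      = (-1 : F) ^ p
          * ((sylv (fun j : Fin m => A (i0.succAbove j)) B p q).coeff (p + q))
          * ∏ j, (A i0 - B j) := by
  classical
  set α : F := A i0 with hαdef
  set A' : Fin m → F := fun j => A (i0.succAbove j) with hA'def
  have hA'inj : Function.Injective A' := fun a b h => Fin.succAbove_right_injective (hA h)
  set emb : Fin m ↪ Fin (m + 1) := i0.succAboveEmb with hembdef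
  -- complement of the mapped set
  have hcompl : ∀ S' : Finset (Fin m), (S'.map emb)ᶜ = insert i0 (S'ᶜ.map emb) := by
    intro S'
    ext i
    simp only [Finset.mem_compl, Finset.mem_map, Finset.mem_insert]
    constructor
    · intro hni
      by_cases h : i = i0
      · exact Or.inl h
      · obtain ⟨j, rfl⟩ := Fin.exists_succAbove_eq h
        refine Or.inr ⟨j, fun hjS => hni ⟨j, hjS, rfl⟩, rfl⟩
    · rintro (rfl | ⟨j, hj, rfl⟩) ⟨j', hj', hj'e⟩
      · exact Fin.succAbove_ne i j' hj'e
      · exact hj (emb.injective hj'e ▸ hj')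
  have hi0notmap : ∀ S' : Finset (Fin m), i0 ∉ S'.map emb := by
    intro S' hmem
    obtain ⟨j, _, hj⟩ := Finset.mem_map.mp hmem
    exact Fin.succAbove_ne i0 j hj
  -- Step 1: restrict the outer sum to subsets avoiding i0
  have heval : (sylv A B p q).eval α
      = ∑ S' ∈ (univ : Finset (Fin m)).powersetCard p,
          ∑ T ∈ (univ : Finset (Fin n)).powersetCard q,
            ((Rp A B (S'.map emb) T * Rp A B (S'.map emb)ᶜ Tᶜ) /
                (Rp A A (S'.map emb) (S'.map emb)ᶜ * Rp B B T Tᶜ))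
              * (∏ i ∈ S', (α - A' i)) * (∏ j ∈ T, (α - B j)) := by
    rw [sylv, eval_finset_sum]
    have hsub : (({i0}ᶜ : Finset (Fin (m+1)))).powersetCard p
        ⊆ (univ : Finset (Fin (m+1))).powersetCard p :=
      Finset.powersetCard_mono (Finset.subset_univ _)
    rw [← Finset.sum_subset hsub ?h1]
    case h1 =>
      intro S hS hSnot
      have hScard : S.card = p := (Finset.mem_powersetCard.mp hS).2
      have hi0S : i0 ∈ S := by
        by_contra hni
        exact hSnot (Finset.mem_powersetCard.mpr ⟨fun x hx => by
          simp only [Finset.mem_compl, Finset.mem_singleton]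
          rintro rfl; exact hni hx, hScard⟩)
      rw [eval_finset_sum]
      refine Finset.sum_eq_zero fun T hT => ?_
      rw [eval_mul, eval_mul, RX_eval]
      rw [Finset.prod_eq_zero hi0S (by rw [hαdef]; ring)]
      ring
    · have hcomplset : ({i0}ᶜ : Finset (Fin (m+1))) = univ.map emb := by
        ext i
        simp only [Finset.mem_compl, Finset.mem_singleton, Finset.mem_map, Finset.mem_univ,
          true_and]
        rw [hembdef]
        simp only [Fin.succAboveEmb, Function.Embedding.coeFn_mk]
        exact (Fin.exists_succAbove_eq_iff).symm
      rw [hcomplset, Finset.powersetCard_map, Finset.sum_map]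
      refine Finset.sum_congr rfl fun S' hS' => ?_
      rw [eval_finset_sum]
      refine Finset.sum_congr rfl fun T hT => ?_
      rw [eval_mul, eval_mul, eval_C, RX_eval, RX_eval]
      simp only [show ∀ S'' : Finset (Fin m),
        (Finset.mapEmbedding emb).toEmbedding S'' = S''.map emb from fun _ => rfl]
      rw [show (∏ i ∈ S'.map emb, (α - A i)) = ∏ i ∈ S', (α - A' i) by
        rw [Finset.prod_map]; rfl]
      ring
  rw [heval, sylv_coeff]
  rw [Finset.mul_sum, Finset.sum_mul]
  refine Finset.sum_congr rfl fun S' hS' => ?_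
  rw [Finset.mul_sum, Finset.sum_mul]
  refine Finset.sum_congr rfl fun T hT => ?_
  have hS'card : S'.card = p := (Finset.mem_powersetCard.mp hS').2
  -- now per-term identity
  set S := S'.map emb with hSdef
  -- rewrite the Rp's
  have h1 : Rp A B S T = Rp A' B S' T := by
    rw [Rp, Rp, hSdef, Finset.prod_map]; rfl
  have h2 : Rp A B Sᶜ Tᶜ = (∏ j ∈ Tᶜ, (α - B j)) * Rp A' B S'ᶜ Tᶜ := by
    rw [Rp, hSdef, hcompl, Finset.prod_insert (hi0notmap _), Finset.prod_map]
    rfl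
  have h3 : Rp A A S Sᶜ = (∏ i ∈ S', (A' i - α)) * Rp A' A' S' S'ᶜ := by
    rw [Rp, Rp, hSdef, hcompl, ← Finset.prod_mul_distrib]
    rw [Finset.prod_map]
    refine Finset.prod_congr rfl fun i _ => ?_
    rw [Finset.prod_insert (hi0notmap _), Finset.prod_map]
    rfl
  -- nonvanishing
  have hu : (∏ i ∈ S', (A' i - α)) ≠ 0 := by
    refine Finset.prod_ne_zero_iff.mpr fun i _ => sub_ne_zero.mpr fun h => ?_
    exact Fin.succAbove_ne i0 i (hA h)
  have hd1 : Rp A' A' S' S'ᶜ ≠ 0 := by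
    refine Finset.prod_ne_zero_iff.mpr fun i hi => Finset.prod_ne_zero_iff.mpr fun j hj => ?_
    refine sub_ne_zero.mpr fun h => ?_
    exact (Finset.mem_compl.mp hj) (hA'inj h ▸ hi)
  have hd2 : Rp B B T Tᶜ ≠ 0 := by
    refine Finset.prod_ne_zero_iff.mpr fun i hi => Finset.prod_ne_zero_iff.mpr fun j hj => ?_
    refine sub_ne_zero.mpr fun h => ?_
    exact (Finset.mem_compl.mp hj) (hB h ▸ hi)
  have hsign : (∏ i ∈ S', (α - A' i)) = (-1 : F) ^ p * ∏ i ∈ S', (A' i - α) := by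
    rw [← hS'card, ← Finset.prod_const]
    rw [← Finset.prod_mul_distrib]
    refine Finset.prod_congr rfl fun i _ => by ring
  have hBsplit : (∏ j, (α - B j)) = (∏ j ∈ T, (α - B j)) * ∏ j ∈ Tᶜ, (α - B j) :=
    (Finset.prod_mul_prod_compl T _).symm
  rw [h1, h2, h3, hsign, hBsplit]
  field_simp
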